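/- Let f satisfy restricted strong convexity with μ̄ = μ − 3τ(s+s*) replaced by μ̄ > 0 on directions that are (s+s*)-sparse, let θ̂ be s*-sparse and θ_t be s-sparse, and suppose f(θ_t) ≤ f(θ̂). Then ‖θ_t − θ̂‖ ≤ 2‖HT_{s+s*}(∇f(θ̂))‖ / μ̄, and in particular ‖θ_t − θ̂‖² ≤ 36‖HT_{s+s*}(∇f(θ̂))‖² / μ̄². -/

import Mathlib

open Finset
open scoped RealInnerProductSpace

noncomputable def htSet {d : ℕ} (k : ℕ) (x : EuclideanSpace ℝ (Fin d)) : Finset (Fin d) :=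
  (Finset.exists_max_image ((Finset.univ : Finset (Fin d)).powersetCard (min k d))
    (fun S => ∑ i ∈ S, (x i) ^ 2)
    ((Finset.powersetCard_nonempty).2 (by simp))).choose

/-- Hard thresholding: keep the `k` entries of largest magnitude, zero the rest. -/
noncomputable def HT {d : ℕ} (k : ℕ) (x : EuclideanSpace ℝ (Fin d)) : EuclideanSpace ℝ (Fin d) :=
  WithLp.toLp 2 (fun i => if i ∈ htSet k x then x i else 0)

/-- Support of a vector. -/
noncomputable def supp {d : ℕ} (x : EuclideanSpace ℝ (Fin d)) : Finset (Fin d) :=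
  Finset.univ.filter (fun i => x i ≠ 0)

/-- Restriction of a vector to an index set. -/
noncomputable def restr {d : ℕ} (S : Finset (Fin d)) (x : EuclideanSpace ℝ (Fin d)) :
    EuclideanSpace ℝ (Fin d) :=
  WithLp.toLp 2 (fun i => if i ∈ S then x i else 0)

/-- ℓ1 norm. -/
noncomputable def l1norm {d : ℕ} (x : EuclideanSpace ℝ (Fin d)) : ℝ := ∑ i, |x i|

/-- ℓ∞ norm. -/
noncomputable def linf {d : ℕ} (x : EuclideanSpace ℝ (Fin d)) : ℝ := ⨆ i, |x i|

lemma htSet_spec {d k : ℕ} (x : EuclideanSpace ℝ (Fin d)) :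
    htSet k x ∈ (Finset.univ : Finset (Fin d)).powersetCard (min k d) ∧
    ∀ S ∈ (Finset.univ : Finset (Fin d)).powersetCard (min k d),
      ∑ i ∈ S, (x i) ^ 2 ≤ ∑ i ∈ htSet k x, (x i) ^ 2 :=
  (Finset.exists_max_image ((Finset.univ : Finset (Fin d)).powersetCard (min k d))
    (fun S => ∑ i ∈ S, (x i) ^ 2)
    ((Finset.powersetCard_nonempty).2 (by simp))).choose_spec

lemma sq_norm_HT {d k : ℕ} (x : EuclideanSpace ℝ (Fin d)) :
    ‖HT k x‖ ^ 2 = ∑ i ∈ htSet k x, (x i) ^ 2 := by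
  rw [← real_inner_self_eq_norm_sq]
  rw [PiLp.inner_apply]
  simp only [RCLike.inner_apply, conj_trivial]
  rw [← Finset.sum_filter_add_sum_filter_not Finset.univ (fun i => i ∈ htSet k x)]
  have h1 : ∀ i ∈ Finset.univ.filter (fun i => i ∈ htSet k x), HT k x i * HT k x i = x i ^ 2 := by
    intro i hi; simp at hi; simp [HT, hi, sq]
  have h2 : ∀ i ∈ Finset.univ.filter (fun i => ¬ i ∈ htSet k x), HT k x i * HT k x i = 0 := by
    intro i hi; simp at hi; simp [HT, hi]
  rw [Finset.sum_congr rfl h1, Finset.sum_congr rfl h2, Finset.sum_const_zero, add_zero]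
  congr 1
  ext i; simp

lemma sum_sq_le_HT {d k : ℕ} (x : EuclideanSpace ℝ (Fin d)) (S : Finset (Fin d))
    (hS : S.card ≤ k) : ∑ i ∈ S, (x i) ^ 2 ≤ ‖HT k x‖ ^ 2 := by
  have hSd : S.card ≤ min k d := le_min hS (by simpa using Finset.card_le_card (Finset.subset_univ S))
  obtain ⟨u, hsu, hut, hcard⟩ := Finset.exists_subsuperset_card_eq (Finset.subset_univ S) hSd
    (by simp [min_le_right])
  have := (htSet_spec (k := k) x).2 u (by simp [Finset.mem_powersetCard, hcard, hut])
  rw [sq_norm_HT]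
  refine le_trans ?_ this
  exact Finset.sum_le_sum_of_subset_of_nonneg hsu (fun i _ _ => sq_nonneg _)

theorem stmt9 (d s sstar : ℕ) (μbar : ℝ) (hμ : 0 < μbar)
    (f : EuclideanSpace ℝ (Fin d) → ℝ) (hf : Differentiable ℝ f)
    (hrsc : ∀ θ1 θ2 : EuclideanSpace ℝ (Fin d), (supp (θ1 - θ2)).card ≤ s + sstar →
      f θ1 - f θ2 - ⟪gradient f θ2, θ1 - θ2⟫ ≥ μbar / 2 * ‖θ1 - θ2‖ ^ 2)
    (θt θhat : EuclideanSpace ℝ (Fin d))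
    (hθt : (supp θt).card ≤ s) (hθhat : (supp θhat).card ≤ sstar)
    (hle : f θt ≤ f θhat) :
    ‖θt - θhat‖ ≤ 2 * ‖HT (s + sstar) (gradient f θhat)‖ / μbar ∧
      ‖θt - θhat‖ ^ 2 ≤ 36 * ‖HT (s + sstar) (gradient f θhat)‖ ^ 2 / μbar ^ 2 := by
  set v : EuclideanSpace ℝ (Fin d) := θt - θhat with hv
  set g : EuclideanSpace ℝ (Fin d) := gradient f θhat with hg
  have hsupp : supp v ⊆ supp θt ∪ supp θhat := by
    intro i hi
    simp only [supp, Finset.mem_filter, Finset.mem_union, Finset.mem_univ, true_and] at *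
    by_contra h
    push_neg at h
    apply hi
    show θt i - θhat i = 0
    rw [h.1, h.2, sub_zero]
  have hcard : (supp v).card ≤ s + sstar :=
    le_trans (Finset.card_le_card hsupp)
      (le_trans (Finset.card_union_le _ _) (add_le_add hθt hθhat))
  have key := hrsc θt θhat hcard
  rw [← hv] at key
  -- μbar/2 * ‖v‖^2 ≤ -⟪g, v⟫
  have h1 : μbar / 2 * ‖v‖ ^ 2 ≤ -⟪g, v⟫ := by linarith [key, hle]
  -- |⟪g,v⟫| ≤ ‖HT g‖ ‖v‖
  have hinner : ⟪g, v⟫ = ⟪restr (supp v) g, v⟫ := by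
    rw [PiLp.inner_apply, PiLp.inner_apply]
    apply Finset.sum_congr rfl
    intro i _
    simp only [RCLike.inner_apply, conj_trivial, restr]
    by_cases hi : i ∈ supp v
    · simp [hi]
    · simp only [supp, Finset.mem_filter, Finset.mem_univ, true_and, not_not] at hi
      simp [hi]
  have hrnorm : ‖restr (supp v) g‖ ≤ ‖HT (s + sstar) g‖ := by
    have h2 : ‖restr (supp v) g‖ ^ 2 ≤ ‖HT (s + sstar) g‖ ^ 2 := by
      rw [← real_inner_self_eq_norm_sq, PiLp.inner_apply]
      simp only [RCLike.inner_apply, conj_trivial]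
      have : ∑ i, restr (supp v) g i * restr (supp v) g i
          = ∑ i ∈ supp v, (g i)^2 := by
        rw [← Finset.sum_filter_add_sum_filter_not Finset.univ (fun i => i ∈ supp v)]
        have e1 : Finset.univ.filter (fun i => i ∈ supp v) = supp v := by ext i; simp
        rw [e1]
        have : ∀ i ∈ Finset.univ.filter (fun i => ¬ i ∈ supp v),
            restr (supp v) g i * restr (supp v) g i = 0 := by
          intro i hi; simp at hi; simp [restr, hi]
        rw [Finset.sum_congr rfl this, Finset.sum_const_zero, add_zero]
        apply Finset.sum_congr rfl
        intro i hi; simp [restr, hi, sq]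
      rw [this]
      exact sum_sq_le_HT g (supp v) hcard
    exact le_of_pow_le_pow_left₀ two_ne_zero (norm_nonneg _) h2
  have hcs : |⟪g, v⟫| ≤ ‖HT (s + sstar) g‖ * ‖v‖ := by
    rw [hinner]
    exact le_trans (abs_real_inner_le_norm _ _)
      (mul_le_mul_of_nonneg_right hrnorm (norm_nonneg _))
  have hmain : μbar / 2 * ‖v‖ ^ 2 ≤ ‖HT (s + sstar) g‖ * ‖v‖ :=
    le_trans h1 (le_trans (neg_le_abs _) hcs)
  set H := ‖HT (s + sstar) g‖ with hH
  have hHnn : 0 ≤ H := norm_nonneg _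
  have hpart1 : ‖v‖ ≤ 2 * H / μbar := by
    rcases (norm_nonneg v).eq_or_lt with h0 | h0
    · rw [← h0]; positivity
    · rw [le_div_iff₀ hμ]
      nlinarith [hmain, h0]
  refine ⟨hpart1, ?_⟩
  have hsq : ‖v‖ ^ 2 ≤ (2 * H / μbar) ^ 2 := pow_le_pow_left₀ (norm_nonneg _) hpart1 2
  have h36 : (2 * H / μbar) ^ 2 ≤ 36 * H ^ 2 / μbar ^ 2 := by
    rw [div_pow, div_le_div_iff₀ (by positivity) (by positivity)]
    nlinarith [sq_nonneg H, sq_nonneg μbar]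
  linarith
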